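/- arXiv:2207.13200 — 2 statements merged into one kernel-verified Lean document; each statement's English description precedes it below -/
import Mathlib

section
/- Let h : E → ℝ be convex and continuous, σ > 0, τ = 1/σ², and let f_{σ²} = g + τ·h_{σ²} where h_{σ²}(x) = inf_{v} { (1/2)‖v − x‖² + σ²·h(v) }. Take the true prior D = prox_{σ²h} and suppose D̂ : E → E satisfies ‖D̂(x) − prox_{σ²h}(x)‖ ≤ σε for all x, with Ĝ(x) = ∇g(x) + τ(x − D̂(x)). Then for any step size 0 < γ ≤ 1/(L+2τ) and any x ∈ E, the point x⁺ = x − γ·Ĝ(x) satisfies f_{σ²}(x⁺) ≤ f_{σ²}(x) − (γ/2)·‖∇f_{σ²}(x)‖² + (γ/2)·τ²σ²ε². -/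
open InnerProductSpace

local notation "⟪" x ", " y "⟫" => @inner ℝ _ _ x y

lemma descent_lemma {n : ℕ} (g : EuclideanSpace ℝ (Fin n) → ℝ)
    (g' : EuclideanSpace ℝ (Fin n) → EuclideanSpace ℝ (Fin n)) (L : ℝ)
    (hgrad : ∀ x, HasGradientAt g (g' x) x)
    (hgLip : ∀ x y, ‖g' x - g' y‖ ≤ L * ‖x - y‖)
    (x y : EuclideanSpace ℝ (Fin n)) :
    g y ≤ g x + ⟪g' x, y - x⟫ + L / 2 * ‖y - x‖ ^ 2 := by
  set d := y - x with hd
  set ψ : ℝ → ℝ := fun t => g (x + t • d) - t * ⟪g' x, d⟫ - L / 2 * t ^ 2 * ‖d‖ ^ 2 with hψ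
  have hline : ∀ t : ℝ, HasDerivAt (fun s : ℝ => x + s • d) d t := fun t => by
    simpa using ((hasDerivAt_id t).smul_const d).const_add x
  have hderiv : ∀ t : ℝ, HasDerivAt ψ (⟪g' (x + t • d), d⟫ - ⟪g' x, d⟫ - L * t * ‖d‖ ^ 2) t := by
    intro t
    have h1 : HasDerivAt (fun s : ℝ => g (x + s • d)) (⟪g' (x + t • d), d⟫) t := by
      have := (hgrad (x + t • d)).hasFDerivAt.comp_hasDerivAt t (hline t)
      exact this
    have h2 : HasDerivAt (fun s : ℝ => s * ⟪g' x, d⟫) (⟪g' x, d⟫) t := by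
      simpa using (hasDerivAt_id t).mul_const (⟪g' x, d⟫)
    have h3 : HasDerivAt (fun s : ℝ => L / 2 * s ^ 2 * ‖d‖ ^ 2) (L * t * ‖d‖ ^ 2) t := by
      have := ((hasDerivAt_pow 2 t).const_mul (L / 2)).mul_const (‖d‖ ^ 2)
      refine this.congr_deriv ?_
      ring
    exact (h1.sub h2).sub h3
  have hanti : AntitoneOn ψ (Set.Icc (0:ℝ) 1) := by
    apply antitoneOn_of_deriv_nonpos (convex_Icc 0 1)
    · exact (Differentiable.continuous fun t => (hderiv t).differentiableAt).continuousOn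
    · intro t _; exact (hderiv t).differentiableAt.differentiableWithinAt
    · intro t ht
      rw [interior_Icc] at ht
      rw [(hderiv t).deriv]
      have key : ⟪g' (x + t • d), d⟫ - ⟪g' x, d⟫ ≤ L * t * ‖d‖ ^ 2 := by
        rw [← inner_sub_left]
        calc ⟪g' (x + t • d) - g' x, d⟫ ≤ ‖g' (x + t • d) - g' x‖ * ‖d‖ :=
              real_inner_le_norm _ _
          _ ≤ (L * ‖(x + t • d) - x‖) * ‖d‖ := by
              exact mul_le_mul_of_nonneg_right (hgLip _ _) (norm_nonneg _)
          _ = L * t * ‖d‖ ^ 2 := by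
              rw [add_sub_cancel_left, norm_smul, Real.norm_eq_abs,
                abs_of_nonneg ht.1.le]
              ring
      linarith
  have := hanti (Set.mem_Icc.mpr ⟨le_refl 0, zero_le_one⟩)
      (Set.mem_Icc.mpr ⟨zero_le_one, le_refl 1⟩) zero_le_one
  simp only [hψ, zero_smul, add_zero, one_smul, one_mul, one_pow] at this
  have hxy : x + d = y := by rw [hd]; abel
  rw [hxy] at this
  linarith


set_option maxHeartbeats 1000000 in
/-- A single mismatched SD-RED step decreases the smoothed objective
`f_{σ²} = g + τ·h_{σ²}` up to the error term `(γ/2)·τ²σ²ε²`. -/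
theorem sdred_step_smoothed_descent {n : ℕ}
    (g h : EuclideanSpace ℝ (Fin n) → ℝ)
    (g' prox Dh Gh : EuclideanSpace ℝ (Fin n) → EuclideanSpace ℝ (Fin n))
    (L σ ε τ γ : ℝ)
    (hL : 0 < L)
    (hgconv : ConvexOn ℝ Set.univ g)
    (hgrad : ∀ x, HasGradientAt g (g' x) x)
    (hgLip : ∀ x y, ‖g' x - g' y‖ ≤ L * ‖x - y‖)
    (hhconv : ConvexOn ℝ Set.univ h) (hhcont : Continuous h)
    (hσ : 0 < σ) (hε : 0 < ε) (hτ : τ = 1 / σ ^ 2)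
    (hprox : ∀ x, IsMinOn (fun v => (1 / 2) * ‖v - x‖ ^ 2 + σ ^ 2 * h v)
      Set.univ (prox x))
    (hmis : ∀ x, ‖Dh x - prox x‖ ≤ σ * ε)
    (hGh : ∀ x, Gh x = g' x + τ • (x - Dh x))
    (hγ0 : 0 < γ) (hγ : γ ≤ 1 / (L + 2 * τ))
    (x : EuclideanSpace ℝ (Fin n)) :
    (fun z : EuclideanSpace ℝ (Fin n) =>
        g z + τ * ⨅ v : EuclideanSpace ℝ (Fin n),
          ((1 / 2) * ‖v - z‖ ^ 2 + σ ^ 2 * h v)) (x - γ • Gh x)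
      ≤ (fun z : EuclideanSpace ℝ (Fin n) =>
          g z + τ * ⨅ v : EuclideanSpace ℝ (Fin n),
            ((1 / 2) * ‖v - z‖ ^ 2 + σ ^ 2 * h v)) x
        - (γ / 2) * ‖g' x + τ • (x - prox x)‖ ^ 2
        + (γ / 2) * τ ^ 2 * σ ^ 2 * ε ^ 2 := by
  have hτ0 : 0 < τ := by rw [hτ]; positivity
  set φ : EuclideanSpace ℝ (Fin n) → EuclideanSpace ℝ (Fin n) → ℝ :=
    fun z v => (1 / 2) * ‖v - z‖ ^ 2 + σ ^ 2 * h v with hφ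
  set F : EuclideanSpace ℝ (Fin n) → ℝ := fun z => ⨅ v, φ z v with hF
  have hmin : ∀ z v, φ z (prox z) ≤ φ z v := fun z v =>
    (isMinOn_iff.mp (hprox z)) v (Set.mem_univ v)
  have hbdd : ∀ z, BddBelow (Set.range (φ z)) := fun z =>
    ⟨φ z (prox z), Set.forall_mem_range.mpr (hmin z)⟩
  have hFle : ∀ z v, F z ≤ φ z v := fun z v => ciInf_le (hbdd z) v
  have hFeq : ∀ z, F z = φ z (prox z) := fun z =>
    le_antisymm (hFle z _) (le_ciInf (hmin z))
  set p := prox x with hp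
  set G := g' x + τ • (x - p) with hG
  set Ghat := Gh x with hGhat
  set y := x - γ • Ghat with hy
  have hyx : y - x = -(γ • Ghat) := by rw [hy]; abel
  -- envelope quadratic upper bound
  have henv : F y ≤ F x + ⟪x - p, y - x⟫ + (1 / 2) * ‖y - x‖ ^ 2 := by
    have h1 : F y ≤ φ y p := hFle y p
    have h2 : ‖p - y‖ ^ 2 = ‖p - x‖ ^ 2 - 2 * ⟪p - x, y - x⟫ + ‖y - x‖ ^ 2 := by
      have : p - y = (p - x) - (y - x) := by abel
      rw [this, norm_sub_sq_real]
    have h3 : ⟪x - p, y - x⟫ = -⟪p - x, y - x⟫ := by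
      rw [show x - p = -(p - x) by abel, inner_neg_left]
    rw [hFeq x]
    simp only [hφ] at h1 ⊢
    rw [h2] at h1
    linarith
  -- g quadratic upper bound
  have hgup : g y ≤ g x + ⟪g' x, y - x⟫ + L / 2 * ‖y - x‖ ^ 2 :=
    descent_lemma g g' L hgrad hgLip x y
  -- combine inner products
  have hinner : ⟪g' x, y - x⟫ + τ * ⟪x - p, y - x⟫ = ⟪G, y - x⟫ := by
    rw [hG, inner_add_left, real_inner_smul_left]
  have htotal : g y + τ * F y ≤ g x + τ * F x + ⟪G, y - x⟫
      + (L + τ) / 2 * ‖y - x‖ ^ 2 := by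
    nlinarith [henv, hgup, hinner, hτ0]
  -- rewrite in terms of Ghat
  have hiGGhat : ⟪G, y - x⟫ = -(γ * ⟪G, Ghat⟫) := by
    rw [hyx, inner_neg_right, real_inner_smul_right]
  have hnrm : ‖y - x‖ ^ 2 = γ ^ 2 * ‖Ghat‖ ^ 2 := by
    rw [hyx, norm_neg, norm_smul, Real.norm_eq_abs, abs_of_pos hγ0, mul_pow]
  -- error bound
  have herrv : Ghat - G = τ • (p - Dh x) := by
    rw [hGhat, hGh x, hG]
    module
  have herr : ‖Ghat - G‖ ≤ τ * (σ * ε) := by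
    rw [herrv, norm_smul, Real.norm_eq_abs, abs_of_pos hτ0]
    have : ‖p - Dh x‖ = ‖Dh x - p‖ := by rw [← norm_neg]; congr 1; abel
    rw [this]
    exact mul_le_mul_of_nonneg_left (hmis x) hτ0.le
  have herr2 : ‖Ghat - G‖ ^ 2 ≤ τ ^ 2 * σ ^ 2 * ε ^ 2 := by
    have h0 : (0:ℝ) ≤ τ * (σ * ε) := by positivity
    nlinarith [norm_nonneg (Ghat - G)]
  have hexp : ‖Ghat - G‖ ^ 2 = ‖Ghat‖ ^ 2 - 2 * ⟪G, Ghat⟫ + ‖G‖ ^ 2 := by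
    rw [norm_sub_sq_real, real_inner_comm]
  -- step size bound
  have hLτ : 0 < L + 2 * τ := by linarith
  have hγ1 : γ * (L + 2 * τ) ≤ 1 := by
    rw [div_eq_mul_inv, one_mul] at hγ
    calc γ * (L + 2 * τ) ≤ (L + 2 * τ)⁻¹ * (L + 2 * τ) :=
          mul_le_mul_of_nonneg_right hγ hLτ.le
      _ = 1 := inv_mul_cancel₀ hLτ.ne'
  have hquad : (L + τ) / 2 * ‖y - x‖ ^ 2 ≤ γ / 2 * ‖Ghat‖ ^ 2 := by
    rw [hnrm]
    nlinarith [mul_nonneg (mul_nonneg hγ0.le (sq_nonneg ‖Ghat‖)) (sub_nonneg.mpr hγ1),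
      mul_nonneg (mul_nonneg (mul_nonneg hγ0.le hγ0.le) hτ0.le) (sq_nonneg ‖Ghat‖)]
  -- finish
  show g y + τ * F y ≤ g x + τ * F x - γ / 2 * ‖G‖ ^ 2 + γ / 2 * τ ^ 2 * σ ^ 2 * ε ^ 2
  nlinarith [htotal, hquad, hiGGhat, hexp, herr2, hγ0]
end

section
/- Assume λ < 1 and 0 < γ < (1−λ)τ/(L+(1+λ)τ)², and set η² = 1 − 2γτ(1−λ) + γ²(L+(1+λ)τ)². Then 0 < η² < 1 and for every x ∈ E and every x* ∈ E with G(x*) = 0, ‖x − γ·G(x) − x*‖² ≤ η²·‖x − x*‖². -/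
open InnerProductSpace

lemma grad_mono_aux {n : ℕ} (g : EuclideanSpace ℝ (Fin n) → ℝ)
    (g' : EuclideanSpace ℝ (Fin n) → EuclideanSpace ℝ (Fin n))
    (hgconv : ConvexOn ℝ Set.univ g)
    (hgrad : ∀ x, HasGradientAt g (g' x) x)
    (x y : EuclideanSpace ℝ (Fin n)) :
    0 ≤ ⟪g' y - g' x, y - x⟫_ℝ := by
  set φ : ℝ → ℝ := fun t => g (x + t • (y - x)) with hφ
  have hφd : ∀ t : ℝ, HasDerivAt φ (⟪g' (x + t • (y - x)), y - x⟫_ℝ) t := by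
    intro t
    have h1 : HasDerivAt (fun t : ℝ => x + t • (y - x)) (y - x) t := by
      simpa using ((hasDerivAt_id t).smul_const (y - x)).const_add x
    have h2 := (hgrad (x + t • (y - x))).hasFDerivAt.comp_hasDerivAt t h1
    simp at h2
    exact h2
  have hφc : ConvexOn ℝ Set.univ φ := by
    refine ⟨convex_univ, ?_⟩
    intro s _ t _ a b ha hb hab
    have key : x + (a * s + b * t) • (y - x)
        = a • (x + s • (y - x)) + b • (x + t • (y - x)) := by
      rw [show a • (x + s • (y - x)) + b • (x + t • (y - x))
          = (a + b) • x + (a * s + b * t) • (y - x) by module, hab, one_smul]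
    have := hgconv.2 (Set.mem_univ (x + s • (y - x))) (Set.mem_univ (x + t • (y - x))) ha hb hab
    simpa [hφ, smul_eq_mul, key] using this
  have h0 := hφc.le_slope_of_hasDerivAt (Set.mem_univ (0 : ℝ)) (Set.mem_univ 1) one_pos (hφd 0)
  have h1 := hφc.slope_le_of_hasDerivAt (Set.mem_univ (0 : ℝ)) (Set.mem_univ 1) one_pos (hφd 1)
  have h01 : ⟪g' (x + (0:ℝ) • (y - x)), y - x⟫_ℝ ≤ ⟪g' (x + (1:ℝ) • (y - x)), y - x⟫_ℝ :=
    le_trans h0 h1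
  simp only [zero_smul, add_zero, one_smul, add_sub_cancel] at h01
  rw [inner_sub_left]
  linarith

set_option maxHeartbeats 800000 in
/-- Proposition 4: for a contractive prior and a sufficiently small step size,
the exact SD-RED step is an `η`-contraction towards any zero of `G`,
with `η² = 1 − 2γτ(1−λ) + γ²(L+(1+λ)τ)² ∈ (0, 1)`. -/
theorem G_step_contraction {n : ℕ}
    (g : EuclideanSpace ℝ (Fin n) → ℝ)
    (g' D G : EuclideanSpace ℝ (Fin n) → EuclideanSpace ℝ (Fin n))
    (L lam τ γ η2 : ℝ)
    (hL : 0 < L)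
    (hgconv : ConvexOn ℝ Set.univ g)
    (hgrad : ∀ x, HasGradientAt g (g' x) x)
    (hgLip : ∀ x y, ‖g' x - g' y‖ ≤ L * ‖x - y‖)
    (hlam0 : 0 < lam) (hlam1 : lam < 1)
    (hD : ∀ x y, ‖D x - D y‖ ≤ lam * ‖x - y‖)
    (hτ : 0 < τ)
    (hG : ∀ x, G x = g' x + τ • (x - D x))
    (hγ0 : 0 < γ) (hγ : γ < (1 - lam) * τ / (L + (1 + lam) * τ) ^ 2)
    (hη2 : η2 = 1 - 2 * γ * τ * (1 - lam) + γ ^ 2 * (L + (1 + lam) * τ) ^ 2) :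
    0 < η2 ∧ η2 < 1 ∧
      ∀ x xstar : EuclideanSpace ℝ (Fin n), G xstar = 0 →
        ‖x - γ • G x - xstar‖ ^ 2 ≤ η2 * ‖x - xstar‖ ^ 2 := by
  set a : ℝ := τ * (1 - lam) with ha
  set C : ℝ := L + (1 + lam) * τ with hC
  have ha0 : 0 < a := by rw [ha]; nlinarith
  have hC0 : 0 < C := by rw [hC]; nlinarith
  have haC : a < C := by rw [ha, hC]; nlinarith
  have hγC : γ * C ^ 2 < a := by
    have h := (lt_div_iff₀ (by positivity : (0:ℝ) < C ^ 2)).mp hγ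
    rw [ha]; nlinarith
  refine ⟨by nlinarith [sq_nonneg (1 - γ * a)], by nlinarith, ?_⟩
  intro x xstar hxs
  have hGd : G x = (g' x - g' xstar) + τ • ((x - xstar) - (D x - D xstar)) := by
    have h1 := hG x
    have h2 := hG xstar
    rw [hxs] at h2
    rw [h1]
    have : g' xstar + τ • (xstar - D xstar) = 0 := h2.symm
    rw [show (g' x - g' xstar) + τ • ((x - xstar) - (D x - D xstar))
        = (g' x + τ • (x - D x)) - (g' xstar + τ • (xstar - D xstar)) by module, this]
    abel
  set u := x - xstar with hu
  have hinner : a * ‖u‖ ^ 2 ≤ ⟪G x, u⟫_ℝ := by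
    rw [hGd, inner_add_left, real_inner_smul_left]
    simp only [inner_sub_left, real_inner_self_eq_norm_sq]
    have hm := grad_mono_aux g g' hgconv hgrad xstar x
    rw [← hu, inner_sub_left] at hm
    have hDc : ⟪D x - D xstar, u⟫_ℝ ≤ lam * ‖u‖ ^ 2 := by
      calc ⟪D x - D xstar, u⟫_ℝ ≤ ‖D x - D xstar‖ * ‖u‖ := real_inner_le_norm _ _
        _ ≤ lam * ‖u‖ * ‖u‖ := by
            have := hD x xstar
            have h0 : (0:ℝ) ≤ ‖u‖ := norm_nonneg _
            nlinarith [this]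
        _ = lam * ‖u‖ ^ 2 := by ring
    rw [inner_sub_left] at hDc
    nlinarith [hm]
  have hnorm : ‖G x‖ ≤ C * ‖u‖ := by
    rw [hGd]
    calc ‖(g' x - g' xstar) + τ • (u - (D x - D xstar))‖
        ≤ ‖g' x - g' xstar‖ + ‖τ • (u - (D x - D xstar))‖ := norm_add_le _ _
      _ ≤ L * ‖u‖ + τ * (‖u‖ + ‖D x - D xstar‖) := by
          rw [norm_smul, Real.norm_eq_abs, abs_of_pos hτ]
          have h1 := hgLip x xstar
          have h2 := norm_sub_le u (D x - D xstar)
          nlinarith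
      _ ≤ C * ‖u‖ := by
          have := hD x xstar
          have h0 : (0:ℝ) ≤ ‖u‖ := norm_nonneg _
          nlinarith
  have hexp : ‖u - γ • G x‖ ^ 2 = ‖u‖ ^ 2 - 2 * γ * ⟪G x, u⟫_ℝ + γ ^ 2 * ‖G x‖ ^ 2 := by
    rw [norm_sub_sq_real, norm_smul, real_inner_smul_right, Real.norm_eq_abs,
      abs_of_pos hγ0, real_inner_comm]
    ring
  have hrw : x - γ • G x - xstar = u - γ • G x := by rw [hu]; abel
  rw [hrw, hexp]
  have hGsq : ‖G x‖ ^ 2 ≤ C ^ 2 * ‖u‖ ^ 2 := by nlinarith [norm_nonneg (G x), norm_nonneg u]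
  rw [hη2]
  have : a = τ * (1 - lam) := ha
  nlinarith [mul_le_mul_of_nonneg_left hinner hγ0.le, mul_le_mul_of_nonneg_left hGsq (sq_nonneg γ)]
end
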